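/- Let n ≥ 2, let M be a real symmetric positive-definite n×n matrix with all diagonal entries equal to 1, and fix indices i ≠ j. For l ∈ (0,π), let M(l) be the matrix obtained from M by replacing both entries (i,j) and (j,i) by cos l, and suppose M(l) is positive definite. Define θ(l) = arccos( −(M(l)⁻¹)_{ij} / √((M(l)⁻¹)_{ii} (M(l)⁻¹)_{jj}) ). Then θ is differentiable at l with θ'(l) = sin l · √( det M₀ / det M(l) ), where M₀ is the matrix obtained from M by deleting rows i,j and columns i,j (a matrix which does not depend on l). Geometrically: for a spherical simplex, the derivative of the interior dihedral angle θ_{ij} with respect to the edge length l_{ij} is 𝒱_{ij} sin l_{ij} / 𝒱. -/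

import Mathlib

/-- The symmetric matrix obtained from `M` by replacing both entries `(i,j)` and `(j,i)`
by `g`. -/
def replaceSym {n : ℕ} (M : Matrix (Fin n) (Fin n) ℝ) (i j : Fin n) (g : ℝ) :
    Matrix (Fin n) (Fin n) ℝ :=
  Matrix.of fun a b => if (a = i ∧ b = j) ∨ (a = j ∧ b = i) then g else M a b

open Matrix Topology

lemma myPosDef_diag_pos {k : Type*} [Fintype k] [DecidableEq k]
    {A : Matrix k k ℝ} (hA : A.PosDef) (i : k) : 0 < A i i := by
  have := hA.dotProduct_mulVec_pos (x := Pi.single i 1) (by simp [Function.ne_iff])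
  simpa [mulVec_single, dotProduct_single, single_dotProduct] using this

lemma myPosDef_submatrix {m k : Type*} [Fintype m] [Fintype k]
    {M : Matrix k k ℝ} (hM : M.PosDef) {e : m → k} (he : Function.Injective e) :
    (M.submatrix e e).PosDef := by
  classical
  refine PosDef.of_dotProduct_mulVec_pos (hM.1.submatrix e) fun x hx => ?_
  set y : k → ℝ := Function.extend e x 0 with hy
  have hyx : ∀ a, y (e a) = x a := fun a => he.extend_apply x 0 a
  have hy0 : y ≠ 0 := by
    obtain ⟨a, ha⟩ := Function.ne_iff.mp hx
    intro h
    exact ha (by rw [← hyx a, h]; rfl)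
  have hsum : ∀ f : k → ℝ, (∑ c, y c * f c) = ∑ a, x a * f (e a) := by
    intro f
    rw [show (∑ a, x a * f (e a)) = ∑ a, y (e a) * f (e a) by
      exact Finset.sum_congr rfl fun a _ => by rw [hyx]]
    rw [← Finset.sum_image (f := fun c => y c * f c) (g := e)
      (fun a _ b _ h => he h)]
    refine (Finset.sum_subset (Finset.subset_univ _) fun c _ hc => ?_).symm
    have : y c = 0 := by
      apply Function.extend_apply' x (0 : k → ℝ) c
      rintro ⟨a, rfl⟩
      exact hc (Finset.mem_image.mpr ⟨a, Finset.mem_univ a, rfl⟩)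
    simp [this]
  have key : star x ⬝ᵥ (M.submatrix e e) *ᵥ x = star y ⬝ᵥ M *ᵥ y := by
    simp only [star_trivial, dotProduct, mulVec, submatrix_apply]
    rw [hsum fun c => ∑ d, M c d * y d]
    refine Finset.sum_congr rfl fun a _ => ?_
    congr 1
    have : (∑ d, M (e a) d * y d) = ∑ d, y d * M (e a) d := by
      exact Finset.sum_congr rfl fun d _ => mul_comm _ _
    rw [this, hsum fun d => M (e a) d]
    exact Finset.sum_congr rfl fun b _ => mul_comm _ _
  rw [key]
  exact hM.dotProduct_mulVec_pos hy0

variable {n : ℕ} (M : Matrix (Fin n) (Fin n) ℝ) (i j : Fin n)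

/-- The equivalence splitting `Fin n` into `{i, j}` and the rest. -/
def ijEquiv (hij : i ≠ j) : (Fin 2 ⊕ {x : Fin n // x ≠ i ∧ x ≠ j}) ≃ Fin n where
  toFun := Sum.elim ![i, j] fun s => s.1
  invFun x := if h1 : x = i then Sum.inl 0 else if h2 : x = j then Sum.inl 1
    else Sum.inr ⟨x, h1, h2⟩
  left_inv := by
    rintro (a | s)
    · fin_cases a
      · simp
      · simp [(Ne.symm hij : j ≠ i)]
    · simp [s.2.1, s.2.2]
  right_inv x := by
    by_cases h1 : x = i
    · simp [h1]
    · by_cases h2 : x = j <;> simp [h1, h2, (Ne.symm hij : j ≠ i)]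

def Bmat : Matrix (Fin 2) {x : Fin n // x ≠ i ∧ x ≠ j} ℝ :=
  Matrix.of fun a s => M (![i, j] a) s.1

def Dmat : Matrix {x : Fin n // x ≠ i ∧ x ≠ j} {x : Fin n // x ≠ i ∧ x ≠ j} ℝ :=
  Matrix.of fun a b => M a.1 b.1

lemma block_eq (hij : i ≠ j) (hM : M.IsSymm) (hdiag : ∀ a, M a a = 1) (t : ℝ) :
    (replaceSym M i j t).submatrix (ijEquiv i j hij) (ijEquiv i j hij) =
      fromBlocks !![1, t; t, 1] (Bmat M i j) (Bmat M i j)ᵀ (Dmat M i j) := by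
  ext a b
  rcases a with a | s <;> rcases b with b | s'
  · fin_cases a <;> fin_cases b <;>
      simp [ijEquiv, replaceSym, fromBlocks, hij, (Ne.symm hij : j ≠ i), hdiag]
  · fin_cases a <;>
      simp [ijEquiv, replaceSym, fromBlocks, Bmat, s'.2.1, s'.2.2, (Ne.symm hij : j ≠ i)]
  · fin_cases b <;>
      simp [ijEquiv, replaceSym, fromBlocks, Bmat, s.2.1, s.2.2, hM.apply, hij]
  · simp [ijEquiv, replaceSym, fromBlocks, Dmat, s.2.1, s.2.2]

lemma det_block (hij : i ≠ j) (hM : M.IsSymm) (hdiag : ∀ a, M a a = 1) (t : ℝ)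
    (hD : IsUnit (Dmat M i j).det) :
    (replaceSym M i j t).det = (Dmat M i j).det *
      (!![(1:ℝ), t; t, 1] - Bmat M i j * (Dmat M i j)⁻¹ * (Bmat M i j)ᵀ).det := by
  haveI iD : Invertible (Dmat M i j) := (Dmat M i j).invertibleOfIsUnitDet hD
  rw [← det_submatrix_equiv_self (ijEquiv i j hij), block_eq M i j hij hM hdiag,
    det_fromBlocks₂₂, invOf_eq_nonsing_inv]

lemma inv_entries (hij : i ≠ j) (hM : M.IsSymm) (hdiag : ∀ a, M a a = 1) (t : ℝ)
    (hD : IsUnit (Dmat M i j).det)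
    (hS : IsUnit (!![(1:ℝ), t; t, 1] - Bmat M i j * (Dmat M i j)⁻¹ * (Bmat M i j)ᵀ).det) :
    ∀ a b : Fin 2,
      (replaceSym M i j t)⁻¹ (ijEquiv i j hij (Sum.inl a)) (ijEquiv i j hij (Sum.inl b)) =
        (!![(1:ℝ), t; t, 1] - Bmat M i j * (Dmat M i j)⁻¹ * (Bmat M i j)ᵀ)⁻¹ a b := by
  intro a b
  haveI iD : Invertible (Dmat M i j) := (Dmat M i j).invertibleOfIsUnitDet hD
  set Sc := !![(1:ℝ), t; t, 1] - Bmat M i j * (Dmat M i j)⁻¹ * (Bmat M i j)ᵀ with hSc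
  haveI iS : Invertible Sc := Sc.invertibleOfIsUnitDet hS
  have hSc2 : Sc = !![(1:ℝ), t; t, 1] - Bmat M i j * ⅟(Dmat M i j) * (Bmat M i j)ᵀ := by
    rw [hSc, invOf_eq_nonsing_inv]
  haveI iS' : Invertible (!![(1:ℝ), t; t, 1] - Bmat M i j * ⅟(Dmat M i j) * (Bmat M i j)ᵀ) :=
    hSc2 ▸ iS
  haveI iP : Invertible (fromBlocks !![(1:ℝ), t; t, 1] (Bmat M i j) (Bmat M i j)ᵀ (Dmat M i j)) :=
    fromBlocks₂₂Invertible _ _ _ _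
  have h1 : (replaceSym M i j t)⁻¹ (ijEquiv i j hij (Sum.inl a)) (ijEquiv i j hij (Sum.inl b))
      = ((replaceSym M i j t).submatrix (ijEquiv i j hij) (ijEquiv i j hij))⁻¹
          (Sum.inl a) (Sum.inl b) := by
    rw [inv_submatrix_equiv]; rfl
  rw [h1, block_eq M i j hij hM hdiag, ← invOf_eq_nonsing_inv, invOf_fromBlocks₂₂_eq,
    fromBlocks_apply₁₁, invOf_eq_nonsing_inv, ← hSc2]

/-- Let `M` be a real symmetric positive-definite `n×n` matrix (`n ≥ 2`) with
unit diagonal, `i ≠ j`, and `l ∈ (0,π)` such that `M(l)` (the matrix with entries `(i,j)`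
and `(j,i)` replaced by `cos l`) is positive definite. Then
`θ(l) = arccos(−(M(l)⁻¹)_{ij}/√((M(l)⁻¹)_{ii}(M(l)⁻¹)_{jj}))` is differentiable at `l`
with derivative `sin l · √(det M₀ / det M(l))`, where `M₀` is `M` with rows and columns
`i, j` deleted. -/
theorem stmt_5 (n : ℕ) (hn : 2 ≤ n) (M : Matrix (Fin n) (Fin n) ℝ)
    (hM : M.IsSymm) (hMpos : M.PosDef) (hdiag : ∀ a, M a a = 1)
    (i j : Fin n) (hij : i ≠ j) (l : ℝ) (hl : l ∈ Set.Ioo 0 Real.pi)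
    (hpos : (replaceSym M i j (Real.cos l)).PosDef) :
    HasDerivAt (fun x : ℝ =>
        Real.arccos (-((replaceSym M i j (Real.cos x))⁻¹ i j)
          / Real.sqrt ((replaceSym M i j (Real.cos x))⁻¹ i i
              * (replaceSym M i j (Real.cos x))⁻¹ j j)))
      (Real.sin l * Real.sqrt
        (Matrix.det (Matrix.of fun a b : {x : Fin n // x ≠ i ∧ x ≠ j} => M a.1 b.1)
          / Matrix.det (replaceSym M i j (Real.cos l)))) l := by
  classical
  have hDpd : (Dmat M i j).PosDef := myPosDef_submatrix hMpos Subtype.val_injective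
  have hdD : 0 < (Dmat M i j).det := hDpd.det_pos
  have hDunit : IsUnit (Dmat M i j).det := (ne_of_gt hdD).isUnit
  set G := Bmat M i j * (Dmat M i j)⁻¹ * (Bmat M i j)ᵀ with hG
  have hDsymm : (Dmat M i j)ᵀ = Dmat M i j := by
    ext a b; exact hM.apply a.1 b.1
  have hGT : Gᵀ = G := by
    rw [hG, transpose_mul, transpose_mul, transpose_transpose, transpose_nonsing_inv,
      hDsymm, ← Matrix.mul_assoc]
  have hGsymm : G 1 0 = G 0 1 := by
    have h := congrFun (congrFun hGT 0) 1
    rwa [Matrix.transpose_apply] at h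
  set c1 : ℝ := 1 - G 0 0 with hc1def
  set c2 : ℝ := 1 - G 1 1 with hc2def
  set q : ℝ := G 0 1 with hqdef
  have hScEq : ∀ t : ℝ, !![(1:ℝ), t; t, 1] - G = !![c1, t - q; t - q, c2] := by
    intro t
    ext a b
    fin_cases a <;> fin_cases b <;>
      simp [hc1def, hc2def, hqdef, hGsymm]
  set δ : ℝ → ℝ := fun t => c1 * c2 - (t - q) ^ 2 with hδdef
  have hScdet : ∀ t : ℝ, (!![(1:ℝ), t; t, 1] - G).det = δ t := by
    intro t
    rw [hScEq t, det_fin_two_of, hδdef]; ring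
  have hdet : ∀ t : ℝ, (replaceSym M i j t).det = (Dmat M i j).det * δ t := by
    intro t
    rw [det_block M i j hij hM hdiag t hDunit, ← hG, hScdet]
  set t₀ := Real.cos l with ht₀
  have hδ0 : 0 < δ t₀ := by
    have h := hpos.det_pos
    rw [hdet t₀] at h
    nlinarith [hdD, h]
  have hent : ∀ t : ℝ, 0 < δ t →
      (replaceSym M i j t)⁻¹ i j = (δ t)⁻¹ * (-(t - q)) ∧
      (replaceSym M i j t)⁻¹ i i = (δ t)⁻¹ * c2 ∧
      (replaceSym M i j t)⁻¹ j j = (δ t)⁻¹ * c1 := by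
    intro t ht
    have hSunit :
        IsUnit (!![(1:ℝ), t; t, 1] - Bmat M i j * (Dmat M i j)⁻¹ * (Bmat M i j)ᵀ).det := by
      rw [← hG, hScdet]; exact (ne_of_gt ht).isUnit
    have hinv : (!![(1:ℝ), t; t, 1] - Bmat M i j * (Dmat M i j)⁻¹ * (Bmat M i j)ᵀ)⁻¹
        = (δ t)⁻¹ • !![c2, -(t - q); -(t - q), c1] := by
      rw [← hG, hScEq t, inv_def, adjugate_fin_two_of, det_fin_two_of, Ring.inverse_eq_inv]
      congr 1
      rw [hδdef]; ring
    have h01 : (replaceSym M i j t)⁻¹ i j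
        = (!![(1:ℝ), t; t, 1] - Bmat M i j * (Dmat M i j)⁻¹ * (Bmat M i j)ᵀ)⁻¹ 0 1 :=
      inv_entries M i j hij hM hdiag t hDunit hSunit 0 1
    have h00 : (replaceSym M i j t)⁻¹ i i
        = (!![(1:ℝ), t; t, 1] - Bmat M i j * (Dmat M i j)⁻¹ * (Bmat M i j)ᵀ)⁻¹ 0 0 :=
      inv_entries M i j hij hM hdiag t hDunit hSunit 0 0
    have h11 : (replaceSym M i j t)⁻¹ j j
        = (!![(1:ℝ), t; t, 1] - Bmat M i j * (Dmat M i j)⁻¹ * (Bmat M i j)ᵀ)⁻¹ 1 1 :=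
      inv_entries M i j hij hM hdiag t hDunit hSunit 1 1
    refine ⟨?_, ?_, ?_⟩
    · rw [h01, hinv]; simp
    · rw [h00, hinv]; simp
    · rw [h11, hinv]; simp
  -- positivity of c1, c2
  have hNinv : (replaceSym M i j t₀)⁻¹.PosDef := hpos.inv
  obtain ⟨e1, e2, e3⟩ := hent t₀ hδ0
  have hc2 : 0 < c2 := by
    have hii := myPosDef_diag_pos hNinv i
    rw [e2] at hii
    have := mul_pos hδ0 hii
    rwa [← mul_assoc, mul_inv_cancel₀ (ne_of_gt hδ0), one_mul] at this
  have hc1 : 0 < c1 := by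
    have hjj := myPosDef_diag_pos hNinv j
    rw [e3] at hjj
    have := mul_pos hδ0 hjj
    rwa [← mul_assoc, mul_inv_cancel₀ (ne_of_gt hδ0), one_mul] at this
  set K := Real.sqrt (c1 * c2) with hKdef
  have hK : 0 < K := Real.sqrt_pos.mpr (mul_pos hc1 hc2)
  have hK2 : K ^ 2 = c1 * c2 := Real.sq_sqrt (mul_pos hc1 hc2).le
  -- the expression simplifies
  have hexpr : ∀ t : ℝ, 0 < δ t →
      -((replaceSym M i j t)⁻¹ i j) / Real.sqrt ((replaceSym M i j t)⁻¹ i i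
        * (replaceSym M i j t)⁻¹ j j) = (t - q) / K := by
    intro t ht
    obtain ⟨h1, h2, h3⟩ := hent t ht
    rw [h1, h2, h3]
    have hδinv : 0 < (δ t)⁻¹ := inv_pos.mpr ht
    have hrw : (δ t)⁻¹ * c2 * ((δ t)⁻¹ * c1) = ((δ t)⁻¹) ^ 2 * (c1 * c2) := by ring
    rw [hrw, Real.sqrt_mul (sq_nonneg _), Real.sqrt_sq hδinv.le, hKdef]
    field_simp
  -- eventual equality
  have hcont : Continuous fun x : ℝ => δ (Real.cos x) := by
    simp only [hδdef]
    fun_prop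
  have hev : ∀ᶠ x in 𝓝 l, 0 < δ (Real.cos x) :=
    (isOpen_lt continuous_const hcont).mem_nhds hδ0
  have hfg : (fun x : ℝ =>
        Real.arccos (-((replaceSym M i j (Real.cos x))⁻¹ i j)
          / Real.sqrt ((replaceSym M i j (Real.cos x))⁻¹ i i
              * (replaceSym M i j (Real.cos x))⁻¹ j j)))
      =ᶠ[𝓝 l] fun x => Real.arccos ((Real.cos x - q) / K) :=
    hev.mono fun x hx => congrArg Real.arccos (hexpr (Real.cos x) hx)
  -- calculus
  have hu : HasDerivAt (fun x : ℝ => (Real.cos x - q) / K) (-Real.sin l / K) l :=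
    ((Real.hasDerivAt_cos l).sub_const q).div_const K
  set u₀ : ℝ := (t₀ - q) / K with hu₀def
  have hu₀sq : u₀ ^ 2 < 1 := by
    rw [hu₀def, div_pow, hK2, div_lt_one (mul_pos hc1 hc2)]
    have h' : 0 < c1 * c2 - (t₀ - q) ^ 2 := hδ0
    nlinarith [h']
  have h₁ : u₀ ≠ -1 := by intro h; rw [h] at hu₀sq; norm_num at hu₀sq
  have h₂ : u₀ ≠ 1 := by intro h; rw [h] at hu₀sq; norm_num at hu₀sq
  have harc := (Real.hasDerivAt_arccos h₁ h₂).comp l hu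
  have harc' : HasDerivAt (fun x : ℝ => Real.arccos ((Real.cos x - q) / K))
      (-(1 / Real.sqrt (1 - u₀ ^ 2)) * (-Real.sin l / K)) l := harc
  have hδs : 0 < Real.sqrt (δ t₀) := Real.sqrt_pos.mpr hδ0
  have hval : -(1 / Real.sqrt (1 - u₀ ^ 2)) * (-Real.sin l / K)
      = Real.sin l * Real.sqrt ((Dmat M i j).det / (replaceSym M i j t₀).det) := by
    have h1u : 1 - u₀ ^ 2 = δ t₀ / (c1 * c2) := by
      rw [hu₀def, div_pow, hK2, show δ t₀ = c1 * c2 - (t₀ - q) ^ 2 from rfl]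
      field_simp
    have hdiv : (Dmat M i j).det / (replaceSym M i j t₀).det = 1 / δ t₀ := by
      rw [hdet t₀]
      field_simp
    rw [h1u, hdiv, Real.sqrt_div hδ0.le, Real.sqrt_div (by norm_num : (0:ℝ) ≤ 1),
      Real.sqrt_one, ← hKdef]
    field_simp
  exact hval ▸ harc'.congr_of_eventuallyEq hfg
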